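/- An integer n > 3 is prime if and only if the sum, over all primes p with p ≤ √n, of (C(n + p - 1, n - 1) mod n) equals 0. -/

import Mathlib

open Nat Finset

private lemma asc_ne_zero {n : ℕ} (hn : 0 < n) (k : ℕ) : n.ascFactorial k ≠ 0 := by
  obtain ⟨m, rfl⟩ : ∃ m, n = m + 1 := ⟨n - 1, by omega⟩
  exact (Nat.ascFactorial_pos m k).ne'

private lemma asc_fact_factorization {q n : ℕ} (hq : q.Prime) (hqn : q ∣ n) (hn : 0 < n) :
    ∀ k, 1 ≤ k → k ≤ q → (n.ascFactorial k).factorization q = n.factorization q := by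
  intro k
  induction k with
  | zero => omega
  | succ k ih =>
    intro _ hk
    rcases Nat.eq_zero_or_pos k with rfl | hk1
    · simp [Nat.ascFactorial_succ]
    · rw [Nat.ascFactorial_succ, Nat.factorization_mul (by omega) (asc_ne_zero hn k),
        Finsupp.add_apply, ih hk1 (by omega),
        Nat.factorization_eq_zero_of_not_dvd, Nat.zero_add]
      intro hdvd
      have : q ∣ k := (Nat.dvd_add_right hqn).mp hdvd
      have := Nat.le_of_dvd hk1 this
      omega

private lemma fact_factorization {q : ℕ} (hq : q.Prime) : (q !).factorization q = 1 := by
  have h2 := hq.two_le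
  have h : q ! = q * (q - 1)! := by
    obtain ⟨m, rfl⟩ : ∃ m, q = m + 1 := ⟨q - 1, by omega⟩
    simp [Nat.factorial_succ]
  rw [h, Nat.factorization_mul hq.ne_zero (Nat.factorial_ne_zero _), Finsupp.add_apply,
    hq.factorization, Nat.factorization_eq_zero_of_not_dvd, Finsupp.single_eq_same]
  rw [hq.dvd_factorial]
  omega

private lemma dvd_ascFactorial (n : ℕ) : ∀ k, 1 ≤ k → n ∣ n.ascFactorial k
  | 1, _ => by simp [Nat.ascFactorial]
  | k + 2, _ => by
    rw [Nat.ascFactorial_succ]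
    exact (dvd_ascFactorial n (k + 1) (by omega)).mul_left _

private lemma choose_symm' (n p : ℕ) (h : 1 ≤ n) :
    (n + p - 1).choose (n - 1) = (n + p - 1).choose p := by
  have h1 : p ≤ n + p - 1 := by omega
  have h2 : n + p - 1 - p = n - 1 := by omega
  rw [← h2, Nat.choose_symm h1]

theorem prime_iff_sum_binom_mod_n (n : ℕ) (hn : 3 < n) :
    n.Prime ↔
      ∑ p ∈ (Finset.range (n + 1)).filter (fun p => p.Prime ∧ p ^ 2 ≤ n),
        ((n + p - 1).choose (n - 1) % n) = 0 := by
  constructor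
  · intro hp
    apply Finset.sum_eq_zero
    intro p hpmem
    simp only [Finset.mem_filter, Finset.mem_range] at hpmem
    obtain ⟨hplt, hpprime, hpsq⟩ := hpmem
    rw [← Nat.dvd_iff_mod_eq_zero, choose_symm' n p (by omega)]
    -- n ∣ (n+p-1).choose p
    have hlt : p < n := by nlinarith [hpprime.two_le]
    have key : n.ascFactorial p = p ! * (n + p - 1).choose p :=
      Nat.ascFactorial_eq_factorial_mul_choose' n p
    have hdvd : n ∣ p ! * (n + p - 1).choose p :=
      key ▸ dvd_ascFactorial n p hpprime.one_le
    have hcop : n.Coprime (p !) := by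
      rw [hp.coprime_iff_not_dvd, hp.dvd_factorial]
      omega
    exact hcop.dvd_of_dvd_mul_left hdvd
  · intro hsum
    by_contra hnp
    set q := n.minFac with hqdef
    have hq : q.Prime := Nat.minFac_prime (by omega)
    have hqsq : q ^ 2 ≤ n := Nat.minFac_sq_le_self (by omega) hnp
    have hqn : q ∣ n := Nat.minFac_dvd n
    have hqmem : q ∈ (Finset.range (n + 1)).filter (fun p => p.Prime ∧ p ^ 2 ≤ n) := by
      simp only [Finset.mem_filter, Finset.mem_range]
      exact ⟨by nlinarith [hq.two_le], hq, hqsq⟩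
    have hterm := (Finset.sum_eq_zero_iff.mp hsum) q hqmem
    rw [← Nat.dvd_iff_mod_eq_zero, choose_symm' n q (by omega)] at hterm
    set C := (n + q - 1).choose q with hC
    have hCne : C ≠ 0 := (Nat.choose_pos (by omega)).ne'
    have key : n.ascFactorial q = q ! * C := Nat.ascFactorial_eq_factorial_mul_choose' n q
    have hv : (n.ascFactorial q).factorization q = n.factorization q :=
      asc_fact_factorization hq hqn (by omega) q hq.one_le le_rfl
    have hv2 : (q ! * C).factorization q = 1 + C.factorization q := by
      rw [Nat.factorization_mul (Nat.factorial_ne_zero _) hCne, Finsupp.add_apply,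
        fact_factorization hq]
    have hle : n.factorization q ≤ C.factorization q := by
      exact (Nat.Prime.pow_dvd_iff_le_factorization hq hCne).mp
        (dvd_trans (Nat.ordProj_dvd n q) hterm)
    rw [key, hv2] at hv
    omega
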